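/- Let R : ℝ → ℝ be a continuous, even, positive covariance function of a stationary Gaussian process (in particular nonnegative definite), and suppose R(0) + R(a) > 2R(a/2) for some a > 0. Set ε = (R(0) + R(a) − 2R(a/2))/(3R(0) + R(a) − 4R(a/2)). Then ε ∈ (0,1], and the measure μ = ((1−ε)/2)δ₀ + ((1−ε)/2)δ₁ + ε δ_{1/2} is a probability measure on [0,1] whose energy with respect to the kernel K(u,v) = R(a(u−v)) equals (R(0)² + R(0)R(a) − 2R(a/2)²)/(3R(0) + R(a) − 4R(a/2)). -/

import Mathlib

open MeasureTheory

lemma integrable_dirac' {f : ℝ → ℝ} (hf : Continuous f) (x : ℝ) :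
    Integrable f (Measure.dirac x) :=
  ⟨hf.aestronglyMeasurable, by
    simp [HasFiniteIntegral, MeasureTheory.lintegral_dirac]⟩

lemma integral_three (f : ℝ → ℝ) (hf : Continuous f) (c1 c2 c3 x1 x2 x3 : ℝ)
    (h1 : 0 ≤ c1) (h2 : 0 ≤ c2) (h3 : 0 ≤ c3) :
    ∫ x, f x ∂(ENNReal.ofReal c1 • Measure.dirac x1 +
      ENNReal.ofReal c2 • Measure.dirac x2 + ENNReal.ofReal c3 • Measure.dirac x3)
      = c1 * f x1 + c2 * f x2 + c3 * f x3 := by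
  have i1 : Integrable f (ENNReal.ofReal c1 • Measure.dirac x1) :=
    (integrable_dirac' hf x1).smul_measure ENNReal.ofReal_ne_top
  have i2 : Integrable f (ENNReal.ofReal c2 • Measure.dirac x2) :=
    (integrable_dirac' hf x2).smul_measure ENNReal.ofReal_ne_top
  have i3 : Integrable f (ENNReal.ofReal c3 • Measure.dirac x3) :=
    (integrable_dirac' hf x3).smul_measure ENNReal.ofReal_ne_top
  rw [integral_add_measure (i1.add_measure i2) i3, integral_add_measure i1 i2,
    integral_smul_measure, integral_smul_measure, integral_smul_measure,
    integral_dirac, integral_dirac, integral_dirac,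
    ENNReal.toReal_ofReal h1, ENNReal.toReal_ofReal h2, ENNReal.toReal_ofReal h3]
  simp [smul_eq_mul]

theorem stmt14 (R : ℝ → ℝ) (hc : Continuous R) (he : ∀ t, R (-t) = R t)
    (hposR : ∀ t, 0 < R t)
    (hpd : ∀ (n : ℕ) (t c : Fin n → ℝ), 0 ≤ ∑ i, ∑ j, c i * c j * R (t i - t j))
    (a : ℝ) (ha : 0 < a) (hcond : 2 * R (a/2) < R 0 + R a) (hden : R (a/2) < R 0) :
    let ε := (R 0 + R a - 2 * R (a/2)) / (3 * R 0 + R a - 4 * R (a/2))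
    let μ : Measure ℝ :=
      ENNReal.ofReal ((1-ε)/2) • Measure.dirac 0 +
      ENNReal.ofReal ((1-ε)/2) • Measure.dirac 1 +
      ENNReal.ofReal ε • Measure.dirac (1/2)
    0 < ε ∧ ε ≤ 1 ∧ IsProbabilityMeasure μ ∧
    (∫ u, ∫ v, R (a * (u - v)) ∂μ ∂μ) =
      (R 0 ^ 2 + R 0 * R a - 2 * R (a/2) ^ 2) / (3 * R 0 + R a - 4 * R (a/2)) := by
  intro ε μ
  set r0 := R 0 with hr0
  set r1 := R a with hr1
  set rh := R (a/2) with hrh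
  have hN : 0 < r0 + r1 - 2 * rh := by linarith
  have hD : 0 < 3 * r0 + r1 - 4 * rh := by linarith
  have hε : ε = (r0 + r1 - 2 * rh) / (3 * r0 + r1 - 4 * rh) := rfl
  have hεpos : 0 < ε := div_pos hN hD
  have hεle : ε ≤ 1 := by
    rw [hε, div_le_one hD]; linarith
  have h1ε : 0 ≤ (1 - ε) / 2 := by linarith
  have hεnn : 0 ≤ ε := hεpos.le
  refine ⟨hεpos, hεle, ?_, ?_⟩
  · constructor
    simp only [μ, Measure.coe_add, Measure.coe_smul, Pi.add_apply, Pi.smul_apply,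
      Measure.dirac_apply_of_mem (Set.mem_univ _), smul_eq_mul, mul_one]
    rw [← ENNReal.ofReal_add h1ε h1ε, ← ENNReal.ofReal_add (by linarith) hεnn]
    norm_num
  · have hinner : ∀ u : ℝ, ∫ v, R (a * (u - v)) ∂μ =
        (1-ε)/2 * R (a * (u - 0)) + (1-ε)/2 * R (a * (u - 1)) + ε * R (a * (u - 1/2)) :=
      fun u => integral_three _ (by fun_prop) _ _ _ _ _ _ h1ε h1ε hεnn
    simp only [hinner]
    rw [integral_three _ (by fun_prop) _ _ _ _ _ _ h1ε h1ε hεnn]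
    have e1 : a * ((0:ℝ) - 0) = 0 := by ring
    have e2 : a * ((0:ℝ) - 1) = -a := by ring
    have e3 : a * ((0:ℝ) - 1/2) = -(a/2) := by ring
    have e4 : a * ((1:ℝ) - 0) = a := by ring
    have e5 : a * ((1:ℝ) - 1) = 0 := by ring
    have e6 : a * ((1:ℝ) - 1/2) = a/2 := by ring
    have e7 : a * ((1:ℝ)/2 - 0) = a/2 := by ring
    have e8 : a * ((1:ℝ)/2 - 1) = -(a/2) := by ring
    have e9 : a * ((1:ℝ)/2 - 1/2) = 0 := by ring
    rw [e1, e2, e3, e4, e5, e6, e7, e8, e9, he a, he (a/2), ← hr0, ← hr1, ← hrh]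
    rw [hε]
    have hD' : (3 * r0 + r1 - 4 * rh) ≠ 0 := ne_of_gt hD
    have hD'' : r0 * 3 + r1 - rh * 4 ≠ 0 := ne_of_gt (by linarith)
    field_simp
    ring
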